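/- Let A, B, C be unital ℂ-algebras with B commutative. Let Δ : A → A ⊗ A be a unital algebra homomorphism that is coassociative: (Δ ⊗ id_A) ∘ Δ = (id_A ⊗ Δ) ∘ Δ. Suppose (C, Φ) is a quantum family of all maps from B to A, i.e. Φ : A → B ⊗ C is a unital algebra homomorphism such that for every unital ℂ-algebra D and every unital algebra homomorphism Ψ : A → B ⊗ D there is a unique unital algebra homomorphism Γ : C → D with (id_B ⊗ Γ) ∘ Φ = Ψ. Let m : B ⊗ B → B be the multiplication homomorphism (m(b ⊗ b') = bb', an algebra homomorphism since B is commutative) and F : C ⊗ B → B ⊗ C the flip isomorphism (c ⊗ b ↦ b ⊗ c). Then there is a unique unital algebra homomorphism Γ : C → C ⊗ C satisfying (id_B ⊗ Γ) ∘ Φ = (m ⊗ id_{C⊗C}) ∘ (id_B ⊗ F ⊗ id_C) ∘ (Φ ⊗ Φ) ∘ Δ, and this Γ is coassociative: (Γ ⊗ id_C) ∘ Γ = (id_C ⊗ Γ) ∘ Γ. -/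

import Mathlib

open TensorProduct

section

variable (A B C : Type) [Ring A] [CommRing B] [Ring C]
  [Algebra ℂ A] [Algebra ℂ B] [Algebra ℂ C]

/-- The composite `(m ⊗ id_{C⊗C}) ∘ (id_B ⊗ F ⊗ id_C) ∘ (Φ ⊗ Φ) ∘ Δ : A → B ⊗ (C ⊗ C)`,
where `m : B ⊗ B → B` is the multiplication homomorphism, `F : C ⊗ B → B ⊗ C` the flip,
and the canonical associativity identifications of tensor products (implicit in the
classical notation) are inserted explicitly. -/
noncomputable def comulRHS (Δ : A →ₐ[ℂ] A ⊗[ℂ] A) (Φ : A →ₐ[ℂ] B ⊗[ℂ] C) :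
    A →ₐ[ℂ] B ⊗[ℂ] (C ⊗[ℂ] C) :=
  -- m ⊗ id_{C ⊗ C}
  (Algebra.TensorProduct.map (Algebra.TensorProduct.lmul' ℂ (S := B))
      (AlgHom.id ℂ (C ⊗[ℂ] C))).comp <|
  -- reassociation (B ⊗ ((B ⊗ C) ⊗ C) ≃ (B ⊗ B) ⊗ (C ⊗ C))
  (((Algebra.TensorProduct.congr (AlgEquiv.refl (A₁ := B))
        (Algebra.TensorProduct.assoc ℂ ℂ ℂ B C C)).trans
      (Algebra.TensorProduct.assoc ℂ ℂ ℂ B B (C ⊗[ℂ] C)).symm).toAlgHom).comp <|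
  -- id_B ⊗ F ⊗ id_C
  (Algebra.TensorProduct.map (AlgHom.id ℂ B)
      (Algebra.TensorProduct.map ((Algebra.TensorProduct.comm ℂ C B) : C ⊗[ℂ] B →ₐ[ℂ] B ⊗[ℂ] C)
        (AlgHom.id ℂ C))).comp <|
  -- reassociation ((B ⊗ C) ⊗ (B ⊗ C) ≃ B ⊗ ((C ⊗ B) ⊗ C))
  ((((Algebra.TensorProduct.assoc ℂ ℂ ℂ B C (B ⊗[ℂ] C)).trans
      (Algebra.TensorProduct.congr (AlgEquiv.refl (A₁ := B))
        (Algebra.TensorProduct.assoc ℂ ℂ ℂ C B C).symm)).toAlgHom).comp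
  -- (Φ ⊗ Φ) ∘ Δ
    ((Algebra.TensorProduct.map Φ Φ).comp Δ))

end


section Aux

open Algebra.TensorProduct

variable (B : Type) [CommRing B] [Algebra ℂ B]

/-- The "multiply the `B`-factors" map `(B ⊗ X) ⊗ (B ⊗ Y) → B ⊗ (X ⊗ Y)`. -/
noncomputable def mul2 (X Y : Type) [Ring X] [Ring Y] [Algebra ℂ X] [Algebra ℂ Y] :
    (B ⊗[ℂ] X) ⊗[ℂ] (B ⊗[ℂ] Y) →ₐ[ℂ] B ⊗[ℂ] (X ⊗[ℂ] Y) :=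
  (map (lmul' ℂ (S := B)) (AlgHom.id ℂ (X ⊗[ℂ] Y))).comp <|
  (((Algebra.TensorProduct.congr (AlgEquiv.refl (A₁ := B)) (Algebra.TensorProduct.assoc ℂ ℂ ℂ B X Y)).trans
      (Algebra.TensorProduct.assoc ℂ ℂ ℂ B B (X ⊗[ℂ] Y)).symm).toAlgHom).comp <|
  (map (AlgHom.id ℂ B) (map ((Algebra.TensorProduct.comm ℂ X B) : X ⊗[ℂ] B →ₐ[ℂ] B ⊗[ℂ] X)
      (AlgHom.id ℂ Y))).comp <|
  (((Algebra.TensorProduct.assoc ℂ ℂ ℂ B X (B ⊗[ℂ] Y)).trans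
      (Algebra.TensorProduct.congr (AlgEquiv.refl (A₁ := B)) (Algebra.TensorProduct.assoc ℂ ℂ ℂ X B Y).symm)).toAlgHom)

@[simp] lemma mul2_tmul (X Y : Type) [Ring X] [Ring Y] [Algebra ℂ X] [Algebra ℂ Y]
    (b b' : B) (x : X) (y : Y) :
    mul2 B X Y ((b ⊗ₜ[ℂ] x) ⊗ₜ[ℂ] (b' ⊗ₜ[ℂ] y)) = (b * b') ⊗ₜ[ℂ] (x ⊗ₜ[ℂ] y) := by
  simp [mul2]

variable {X Y Z X' Y' : Type} [Ring X] [Ring Y] [Ring Z] [Ring X'] [Ring Y']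
  [Algebra ℂ X] [Algebra ℂ Y] [Algebra ℂ Z] [Algebra ℂ X'] [Algebra ℂ Y']

lemma mul2_natR (g : Y →ₐ[ℂ] Y') :
    (map (AlgHom.id ℂ B) (map (AlgHom.id ℂ X) g)).comp (mul2 B X Y)
      = (mul2 B X Y').comp (map (AlgHom.id ℂ (B ⊗[ℂ] X)) (map (AlgHom.id ℂ B) g)) := by
  ext : 1 <;> ext <;> simp [Algebra.TensorProduct.one_def]

lemma mul2_natL (g : X →ₐ[ℂ] X') :
    (map (AlgHom.id ℂ B) (map g (AlgHom.id ℂ Y))).comp (mul2 B X Y)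
      = (mul2 B X' Y).comp (map (map (AlgHom.id ℂ B) g) (AlgHom.id ℂ (B ⊗[ℂ] Y))) := by
  ext : 1 <;> ext <;> simp [Algebra.TensorProduct.one_def]

set_option maxHeartbeats 1000000 in
lemma mul2_assoc :
    (map (AlgHom.id ℂ B) (Algebra.TensorProduct.assoc ℂ ℂ ℂ X Y Z).toAlgHom).comp
        ((mul2 B (X ⊗[ℂ] Y) Z).comp (map (mul2 B X Y) (AlgHom.id ℂ (B ⊗[ℂ] Z))))
      = (mul2 B X (Y ⊗[ℂ] Z)).comp ((map (AlgHom.id ℂ (B ⊗[ℂ] X)) (mul2 B Y Z)).comp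
          (Algebra.TensorProduct.assoc ℂ ℂ ℂ (B ⊗[ℂ] X) (B ⊗[ℂ] Y) (B ⊗[ℂ] Z)).toAlgHom) := by
  ext : 1 <;> ext <;> simp [Algebra.TensorProduct.one_def, mul_assoc]

lemma assoc_nat {P Q R : Type} [Ring P] [Ring Q] [Ring R]
    [Algebra ℂ P] [Algebra ℂ Q] [Algebra ℂ R]
    (f : X →ₐ[ℂ] P) (g : Y →ₐ[ℂ] Q) (h : Z →ₐ[ℂ] R) :
    (Algebra.TensorProduct.assoc ℂ ℂ ℂ P Q R).toAlgHom.comp (map (map f g) h)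
      = (map f (map g h)).comp (Algebra.TensorProduct.assoc ℂ ℂ ℂ X Y Z).toAlgHom := by
  ext : 1 <;> ext <;> simp [Algebra.TensorProduct.one_def]

end Aux

lemma map_map_apply {P P' P'' Q Q' Q'' : Type}
    [Ring P] [Ring P'] [Ring P''] [Ring Q] [Ring Q'] [Ring Q'']
    [Algebra ℂ P] [Algebra ℂ P'] [Algebra ℂ P''] [Algebra ℂ Q] [Algebra ℂ Q'] [Algebra ℂ Q'']
    (f : P →ₐ[ℂ] P') (f' : P' →ₐ[ℂ] P'') (g : Q →ₐ[ℂ] Q') (g' : Q' →ₐ[ℂ] Q'')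
    (x : P ⊗[ℂ] Q) :
    Algebra.TensorProduct.map f' g' (Algebra.TensorProduct.map f g x)
      = Algebra.TensorProduct.map (f'.comp f) (g'.comp g) x := by
  rw [Algebra.TensorProduct.map_comp]; rfl


/-- if `B` is commutative, `(A, Δ)` is a "compact quantum semigroup"
(`Δ` a coassociative unital homomorphism) and `(C, Φ)` is the quantum family of all maps
from `B` to `A`, then there is a unique unital homomorphism `Γ : C → C ⊗ C` with
`(id_B ⊗ Γ) ∘ Φ = (m ⊗ id_{C⊗C}) ∘ (id_B ⊗ F ⊗ id_C) ∘ (Φ ⊗ Φ) ∘ Δ`, and this `Γ` is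
coassociative, i.e. `(C, Γ)` is a compact quantum semigroup. -/
theorem quantum_family_comul_exists_unique_and_coassoc
    (A B C : Type) [Ring A] [CommRing B] [Ring C]
    [Algebra ℂ A] [Algebra ℂ B] [Algebra ℂ C]
    (Δ : A →ₐ[ℂ] A ⊗[ℂ] A)
    (hΔ : ((Algebra.TensorProduct.assoc ℂ ℂ ℂ A A A).toAlgHom.comp
        ((Algebra.TensorProduct.map Δ (AlgHom.id ℂ A)).comp Δ)) =
      (Algebra.TensorProduct.map (AlgHom.id ℂ A) Δ).comp Δ)
    (Φ : A →ₐ[ℂ] B ⊗[ℂ] C)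
    (hU : ∀ (D : Type) [Ring D] [Algebra ℂ D] (Ψ : A →ₐ[ℂ] B ⊗[ℂ] D),
      ∃! Γ : C →ₐ[ℂ] D,
        (Algebra.TensorProduct.map (AlgHom.id ℂ B) Γ).comp Φ = Ψ) :
    (∃! Γ : C →ₐ[ℂ] C ⊗[ℂ] C,
        (Algebra.TensorProduct.map (AlgHom.id ℂ B) Γ).comp Φ = comulRHS A B C Δ Φ) ∧
    (∀ Γ : C →ₐ[ℂ] C ⊗[ℂ] C,
        (Algebra.TensorProduct.map (AlgHom.id ℂ B) Γ).comp Φ = comulRHS A B C Δ Φ →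
      ((Algebra.TensorProduct.assoc ℂ ℂ ℂ C C C).toAlgHom.comp
          ((Algebra.TensorProduct.map Γ (AlgHom.id ℂ C)).comp Γ)) =
        (Algebra.TensorProduct.map (AlgHom.id ℂ C) Γ).comp Γ) := by
  constructor
  · exact hU (C ⊗[ℂ] C) (comulRHS A B C Δ Φ)
  · intro Γ hΓ
    have hc : comulRHS A B C Δ Φ
        = (mul2 B C C).comp ((Algebra.TensorProduct.map Φ Φ).comp Δ) := rfl
    rw [hc] at hΓ
    have hΓa : ∀ a : A, Algebra.TensorProduct.map (AlgHom.id ℂ B) Γ (Φ a)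
        = mul2 B C C (Algebra.TensorProduct.map Φ Φ (Δ a)) := fun a => by
      simpa using AlgHom.congr_fun hΓ a
    have hΔa : ∀ a : A, (Algebra.TensorProduct.assoc ℂ ℂ ℂ A A A)
          (Algebra.TensorProduct.map Δ (AlgHom.id ℂ A) (Δ a))
        = Algebra.TensorProduct.map (AlgHom.id ℂ A) Δ (Δ a) := fun a => by
      simpa using AlgHom.congr_fun hΔ a
    have e1a : ∀ x, Algebra.TensorProduct.map (AlgHom.id ℂ B)
          (Algebra.TensorProduct.map (AlgHom.id ℂ C) Γ) (mul2 B C C x)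
        = mul2 B C (C ⊗[ℂ] C) (Algebra.TensorProduct.map (AlgHom.id ℂ (B ⊗[ℂ] C))
            (Algebra.TensorProduct.map (AlgHom.id ℂ B) Γ) x) := fun x => by
      simpa using AlgHom.congr_fun (mul2_natR B Γ) x
    have e2a : ∀ x, Algebra.TensorProduct.map (AlgHom.id ℂ B)
          (Algebra.TensorProduct.map Γ (AlgHom.id ℂ C)) (mul2 B C C x)
        = mul2 B (C ⊗[ℂ] C) C (Algebra.TensorProduct.map
            (Algebra.TensorProduct.map (AlgHom.id ℂ B) Γ)
            (AlgHom.id ℂ (B ⊗[ℂ] C)) x) := fun x => by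
      simpa using AlgHom.congr_fun (mul2_natL B Γ) x
    have e3a : ∀ x, Algebra.TensorProduct.map (AlgHom.id ℂ B)
          (Algebra.TensorProduct.assoc ℂ ℂ ℂ C C C).toAlgHom
          (mul2 B (C ⊗[ℂ] C) C (Algebra.TensorProduct.map (mul2 B C C)
            (AlgHom.id ℂ (B ⊗[ℂ] C)) x))
        = mul2 B C (C ⊗[ℂ] C) (Algebra.TensorProduct.map (AlgHom.id ℂ (B ⊗[ℂ] C)) (mul2 B C C)
            ((Algebra.TensorProduct.assoc ℂ ℂ ℂ (B ⊗[ℂ] C) (B ⊗[ℂ] C) (B ⊗[ℂ] C)) x)) := fun x => by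
      simpa using AlgHom.congr_fun (mul2_assoc B (X := C) (Y := C) (Z := C)) x
    have nata : ∀ x, (Algebra.TensorProduct.assoc ℂ ℂ ℂ (B ⊗[ℂ] C) (B ⊗[ℂ] C) (B ⊗[ℂ] C))
          (Algebra.TensorProduct.map (Algebra.TensorProduct.map Φ Φ) Φ x)
        = Algebra.TensorProduct.map Φ (Algebra.TensorProduct.map Φ Φ)
            ((Algebra.TensorProduct.assoc ℂ ℂ ℂ A A A) x) := fun x => by
      simpa using AlgHom.congr_fun (assoc_nat Φ Φ Φ) x
    have splitL : ∀ x, Algebra.TensorProduct.map (Algebra.TensorProduct.map (AlgHom.id ℂ B) Γ)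
          (AlgHom.id ℂ (B ⊗[ℂ] C)) (Algebra.TensorProduct.map Φ Φ x)
        = Algebra.TensorProduct.map (mul2 B C C) (AlgHom.id ℂ (B ⊗[ℂ] C))
            (Algebra.TensorProduct.map (Algebra.TensorProduct.map Φ Φ) Φ
              (Algebra.TensorProduct.map Δ (AlgHom.id ℂ A) x)) := fun x => by
      rw [map_map_apply, map_map_apply, map_map_apply, hΓ]
      congr 1
    have splitR : ∀ x, Algebra.TensorProduct.map (AlgHom.id ℂ (B ⊗[ℂ] C))
          (Algebra.TensorProduct.map (AlgHom.id ℂ B) Γ) (Algebra.TensorProduct.map Φ Φ x)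
        = Algebra.TensorProduct.map (AlgHom.id ℂ (B ⊗[ℂ] C)) (mul2 B C C)
            (Algebra.TensorProduct.map Φ (Algebra.TensorProduct.map Φ Φ)
              (Algebra.TensorProduct.map (AlgHom.id ℂ A) Δ x)) := fun x => by
      rw [map_map_apply, map_map_apply, map_map_apply, hΓ]
      congr 1
    have key : (Algebra.TensorProduct.map (AlgHom.id ℂ B)
          ((Algebra.TensorProduct.assoc ℂ ℂ ℂ C C C).toAlgHom.comp
            ((Algebra.TensorProduct.map Γ (AlgHom.id ℂ C)).comp Γ))).comp Φ
        = (Algebra.TensorProduct.map (AlgHom.id ℂ B)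
            ((Algebra.TensorProduct.map (AlgHom.id ℂ C) Γ).comp Γ)).comp Φ := by
      apply AlgHom.ext; intro a
      simp only [Algebra.TensorProduct.map_id_comp, AlgHom.comp_apply]
      rw [hΓa, e2a, splitL, e3a, nata, hΔa, e1a, splitR]
    obtain ⟨Γ₀, -, huniq⟩ := hU (C ⊗[ℂ] (C ⊗[ℂ] C))
      ((Algebra.TensorProduct.map (AlgHom.id ℂ B)
        ((Algebra.TensorProduct.map (AlgHom.id ℂ C) Γ).comp Γ)).comp Φ)
    have h1 := huniq ((Algebra.TensorProduct.map (AlgHom.id ℂ C) Γ).comp Γ) rfl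
    have h2 := huniq ((Algebra.TensorProduct.assoc ℂ ℂ ℂ C C C).toAlgHom.comp
      ((Algebra.TensorProduct.map Γ (AlgHom.id ℂ C)).comp Γ)) key
    exact h2.trans h1.symm
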